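/- Antisymmetry of the forms ε_• and ε_∘ on homology: let E be a finite set, σ₀, σ₁ permutations of E, m a perfect matching, ρ_{m,c} = (I − ς_{m,c})^{-1}, and H₁ ⊆ ℤ^E the subgroup generated by differences of perfect matchings. Then for c = 0 and for c = 1, and for all h₁, h₂ ∈ H₁: h₁ᵀ (−I + 2ρ_{m,c}) h₂ = − h₂ᵀ (−I + 2ρ_{m,c}) h₁. -/

import Mathlib

open Finset Matrix

variable {E : Type*}

/-- A perfect matching of `(E, σ₀, σ₁)`: a `{0,1}`-valued function on `E` such that every
cycle (orbit) of `σ₀` and every cycle of `σ₁` contains exactly one element with value `1`. -/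
def IsPerfectMatching (σ₀ σ₁ : Equiv.Perm E) (m : E → ℤ) : Prop :=
  (∀ e, m e = 0 ∨ m e = 1) ∧
  (∀ e, ∃! e', σ₀.SameCycle e e' ∧ m e' = 1) ∧
  (∀ e, ∃! e', σ₁.SameCycle e e' ∧ m e' = 1)

/-- The "broken" permutation matrix `ς_{m,σ}`: the matrix of the permutation `σ`
(with `(σ e, e)`-entry `1`) in which every column `e` with `m e = 1` is replaced by zero. -/
def brokenPermMatrix [DecidableEq E] (σ : Equiv.Perm E) (m : E → ℤ) : Matrix E E ℤ :=
  Matrix.of fun e' e => if e' = σ e ∧ m e = 0 then 1 else 0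

/-- The matrix `ρ_{m,σ} = (I - ς_{m,σ})⁻¹`. -/
noncomputable def rhoMatrix [Fintype E] [DecidableEq E] (σ : Equiv.Perm E) (m : E → ℤ) :
    Matrix E E ℤ :=
  (1 - brokenPermMatrix σ m)⁻¹

/-- The subgroup `H₁ ⊆ ℤ^E` generated by all differences of perfect matchings. -/
def matchingHomology (σ₀ σ₁ : Equiv.Perm E) : AddSubgroup (E → ℤ) :=
  AddSubgroup.closure
    {x | ∃ m' m'', IsPerfectMatching σ₀ σ₁ m' ∧ IsPerfectMatching σ₀ σ₁ m'' ∧ x = m' - m''}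

/-- The "same cycle" 0/1 matrix of a permutation. -/
def cycMatrix [Fintype E] [DecidableEq E] (σ : Equiv.Perm E) : Matrix E E ℤ :=
  Matrix.of fun e' e => if σ.SameCycle e' e then 1 else 0

section Aux

variable [Fintype E] [DecidableEq E]

lemma broken_mul_apply (σ : Equiv.Perm E) (m : E → ℤ) (X : Matrix E E ℤ) (e' e : E) :
    (brokenPermMatrix σ m * X) e' e = if m (σ.symm e') = 0 then X (σ.symm e') e else 0 := by
  rw [Matrix.mul_apply, Finset.sum_eq_single (σ.symm e')]
  · simp [brokenPermMatrix, ite_mul]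
  · intro f _ hf
    have : e' ≠ σ f := fun h => hf (by simp [h])
    simp [brokenPermMatrix, this]
  · simp

lemma mul_brokenT_apply (σ : Equiv.Perm E) (m : E → ℤ) (X : Matrix E E ℤ) (e' e : E) :
    (X * (brokenPermMatrix σ m)ᵀ) e' e = if m (σ.symm e) = 0 then X e' (σ.symm e) else 0 := by
  rw [Matrix.mul_apply, Finset.sum_eq_single (σ.symm e)]
  · simp [brokenPermMatrix, mul_ite]
  · intro f _ hf
    have : e ≠ σ f := fun h => hf (by simp [h])
    simp [brokenPermMatrix, this]
  · simp

lemma broken_pow_apply (σ : Equiv.Perm E) (m : E → ℤ) (k : ℕ) (e' e : E) :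
    (brokenPermMatrix σ m ^ k) e' e =
      if (σ ^ k) e = e' ∧ ∀ j < k, m ((σ ^ j) e) = 0 then 1 else 0 := by
  induction k generalizing e' with
  | zero => simp [Matrix.one_apply, eq_comm]
  | succ k ih =>
    rw [pow_succ', broken_mul_apply, ih]
    by_cases h1 : m (σ.symm e') = 0
    · simp only [h1, if_true]
      have hiff : ((σ ^ k) e = σ.symm e' ∧ ∀ j < k, m ((σ ^ j) e) = 0) ↔
          ((σ ^ (k + 1)) e = e' ∧ ∀ j < k + 1, m ((σ ^ j) e) = 0) := by
        constructor
        · rintro ⟨h2, hall⟩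
          refine ⟨by rw [pow_succ', Equiv.Perm.mul_apply, h2, Equiv.apply_symm_apply], ?_⟩
          intro j hj
          rcases Nat.lt_succ_iff_lt_or_eq.mp hj with hj | rfl
          · exact hall j hj
          · rw [h2]; exact h1
        · rintro ⟨h2, hall⟩
          have hk : (σ ^ k) e = σ.symm e' := by
            rw [← h2, pow_succ', Equiv.Perm.mul_apply, Equiv.symm_apply_apply]
          exact ⟨hk, fun j hj => hall j (Nat.lt_succ_of_lt hj)⟩
      exact if_congr hiff rfl rfl
    · have h3 : ¬ ((σ ^ (k + 1)) e = e' ∧ ∀ j < k + 1, m ((σ ^ j) e) = 0) := by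
        rintro ⟨he, hall⟩
        apply h1
        have h4 : σ.symm e' = (σ ^ k) e := by
          rw [← he, pow_succ', Equiv.Perm.mul_apply, Equiv.symm_apply_apply]
        rw [h4]
        exact hall k (Nat.lt_succ_self k)
      rw [if_neg h1, if_neg h3]

lemma broken_pow_orderOf (σ : Equiv.Perm E) (m : E → ℤ)
    (hu : ∀ e, ∃! e', σ.SameCycle e e' ∧ m e' = 1) :
    brokenPermMatrix σ m ^ orderOf σ = 0 := by
  ext e' e
  rw [broken_pow_apply]
  obtain ⟨u, ⟨hcyc, hmu⟩, -⟩ := hu e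
  obtain ⟨i, hi, hie⟩ := hcyc.exists_pow_eq'
  simp only [Matrix.zero_apply, ite_eq_right_iff]
  rintro ⟨-, hall⟩
  have h0 := hall i hi
  rw [hie, hmu] at h0
  exact absurd h0 one_ne_zero

lemma broken_isUnit (σ : Equiv.Perm E) (m : E → ℤ)
    (hu : ∀ e, ∃! e', σ.SameCycle e e' ∧ m e' = 1) :
    IsUnit (1 - brokenPermMatrix σ m) := by
  set S := brokenPermMatrix σ m
  have h := geom_sum_mul S (orderOf σ)
  rw [broken_pow_orderOf σ m hu] at h
  have h2 : (∑ i ∈ Finset.range (orderOf σ), S ^ i) * (1 - S) = 1 := by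
    have : (∑ i ∈ Finset.range (orderOf σ), S ^ i) * (1 - S) =
        -((∑ i ∈ Finset.range (orderOf σ), S ^ i) * (S - 1)) := by noncomm_ring
    rw [this, h]
    noncomm_ring
  exact (Matrix.isUnit_iff_isUnit_det _).mpr (Matrix.isUnit_det_of_left_inverse h2)

lemma rho_add_transpose (σ : Equiv.Perm E) (m : E → ℤ)
    (h01 : ∀ e, m e = 0 ∨ m e = 1)
    (hu : ∀ e, ∃! e', σ.SameCycle e e' ∧ m e' = 1) :
    rhoMatrix σ m + (rhoMatrix σ m)ᵀ = 1 + cycMatrix σ := by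
  set S := brokenPermMatrix σ m with hS
  set ρ := rhoMatrix σ m with hρ
  set C := cycMatrix σ with hC
  have hunit := broken_isUnit σ m hu
  have hdet : IsUnit (1 - S).det := (Matrix.isUnit_iff_isUnit_det _).mp hunit
  have hl : (1 - S) * ρ = 1 := Matrix.mul_nonsing_inv _ hdet
  have hr : ρ * (1 - S) = 1 := Matrix.nonsing_inv_mul _ hdet
  -- entrywise identity : (1 - S) * C * (1 - S)ᵀ = 1 - S * Sᵀ
  have key : (1 - S) * C * (1 - S)ᵀ = 1 - S * Sᵀ := by
    have expand : (1 - S) * C * (1 - S)ᵀ = (C - S * C) - (C - S * C) * Sᵀ := by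
      rw [Matrix.transpose_sub, Matrix.transpose_one]
      noncomm_ring
    rw [expand]
    ext e' e
    have hc1 : σ.SameCycle (σ.symm e') e ↔ σ.SameCycle e' e := by
      conv_rhs => rw [← σ.apply_symm_apply e']
      exact Equiv.Perm.sameCycle_apply_left.symm
    have hc2 : σ.SameCycle e' (σ.symm e) ↔ σ.SameCycle e' e := by
      conv_rhs => rw [← σ.apply_symm_apply e]
      exact Equiv.Perm.sameCycle_apply_right.symm
    have hc3 : σ.SameCycle (σ.symm e') (σ.symm e) ↔ σ.SameCycle e' e := by
      conv_rhs => rw [← σ.apply_symm_apply e', ← σ.apply_symm_apply e]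
      exact (Equiv.Perm.sameCycle_apply_left.trans Equiv.Perm.sameCycle_apply_right).symm
    simp only [Matrix.sub_apply, hS, hC, broken_mul_apply, mul_brokenT_apply,
      Matrix.transpose_apply]
    simp only [brokenPermMatrix, cycMatrix, Matrix.of_apply, Matrix.one_apply,
      Equiv.apply_symm_apply, hc1, hc2, hc3]
    by_cases hsc : σ.SameCycle e' e
    · by_cases ha : m (σ.symm e') = 0
      · by_cases hb : m (σ.symm e) = 0
        · by_cases hee : e' = e
          · simp [hsc, ha, hb, hee, Equiv.apply_symm_apply]
          · simp [hsc, ha, hb, hee, Ne.symm hee, Equiv.apply_symm_apply]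
        · -- m (σ.symm e) = 1, m (σ.symm e') = 0, so e' ≠ e
          have hee : e' ≠ e := by
            rintro rfl
            exact hb ha
          simp [hsc, ha, hb, hee, Ne.symm hee, Equiv.apply_symm_apply]
      · by_cases hb : m (σ.symm e) = 0
        · have hee : e' ≠ e := by
            rintro rfl
            exact ha hb
          simp [hsc, ha, hb, hee, Ne.symm hee, Equiv.apply_symm_apply]
        · -- both matched: by uniqueness σ.symm e' = σ.symm e, so e' = e
          have ha1 : m (σ.symm e') = 1 := (h01 _).resolve_left ha
          have hb1 : m (σ.symm e) = 1 := (h01 _).resolve_left hb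
          have hee : e' = e := by
            obtain ⟨u, -, huniq⟩ := hu (σ.symm e')
            have h1 : σ.symm e' = u := huniq _ ⟨Equiv.Perm.SameCycle.refl _ _, ha1⟩
            have h2 : σ.symm e = u := huniq _ ⟨hc3.mpr hsc, hb1⟩
            have := h1.trans h2.symm
            exact σ.symm.injective this
          subst hee
          simp [hsc, ha, hb, Equiv.apply_symm_apply, Equiv.Perm.SameCycle.refl]
    · have hee : e' ≠ e := by rintro rfl; exact hsc (Equiv.Perm.SameCycle.refl _ _)
      simp [hsc, hee, Ne.symm hee, (fun h => hsc (hc1.mp h) : ¬ σ.SameCycle (σ.symm e') e),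
        (fun h => hsc (hc2.mp h) : ¬ σ.SameCycle e' (σ.symm e)),
        (fun h => hsc (hc3.mp h) : ¬ σ.SameCycle (σ.symm e') (σ.symm e))]
  -- algebraic identity : (1 - S) * (ρ + ρᵀ - 1) * (1 - S)ᵀ = 1 - S * Sᵀ
  have hlT : ρᵀ * (1 - S)ᵀ = 1 := by
    rw [← Matrix.transpose_mul, hl, Matrix.transpose_one]
  have key2 : (1 - S) * (ρ + ρᵀ - 1) * (1 - S)ᵀ = 1 - S * Sᵀ := by
    have e1 : (1 - S) * (ρ + ρᵀ - 1) = (1 - S) * ρᵀ + S := by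
      rw [mul_sub, mul_add, hl]
      noncomm_ring
    rw [e1, add_mul, Matrix.mul_assoc, hlT, mul_one]
    rw [Matrix.transpose_sub, Matrix.transpose_one]
    noncomm_ring
  -- cancel to conclude ρ + ρᵀ - 1 = C
  have cancel : ∀ X : Matrix E E ℤ, ρ * ((1 - S) * X * (1 - S)ᵀ) * ρᵀ = X := by
    intro X
    calc ρ * ((1 - S) * X * (1 - S)ᵀ) * ρᵀ
        = (ρ * (1 - S)) * X * ((1 - S)ᵀ * ρᵀ) := by noncomm_ring
      _ = X := by
          rw [← Matrix.transpose_mul, hr, Matrix.transpose_one, one_mul, mul_one]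
  have : ρ + ρᵀ - 1 = C := by
    have h1 := cancel (ρ + ρᵀ - 1)
    have h2 := cancel C
    rw [key2] at h1
    rw [key] at h2
    rw [← h1, ← h2]
  rw [← this]
  abel

lemma cyc_mulVec_matching (σ : Equiv.Perm E) (m : E → ℤ)
    (h01 : ∀ e, m e = 0 ∨ m e = 1)
    (hu : ∀ e, ∃! e', σ.SameCycle e e' ∧ m e' = 1) :
    (cycMatrix σ).mulVec m = fun _ => 1 := by
  funext e₀
  obtain ⟨u, ⟨hcyc, hmu⟩, huniq⟩ := hu e₀
  show ∑ e, cycMatrix σ e₀ e * m e = 1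
  rw [Finset.sum_eq_single u]
  · simp [cycMatrix, hcyc, hmu]
  · intro e _ hne
    rcases h01 e with h0 | h1
    · simp [h0]
    · have : ¬ σ.SameCycle e₀ e := fun hc => hne (huniq e ⟨hc, h1⟩)
      simp [cycMatrix, this]
  · simp

lemma cyc_mulVec_homology (σ₀ σ₁ : Equiv.Perm E) (σ : Equiv.Perm E)
    (hgen : ∀ m', IsPerfectMatching σ₀ σ₁ m' →
      (∀ e, m' e = 0 ∨ m' e = 1) ∧ (∀ e, ∃! e', σ.SameCycle e e' ∧ m' e' = 1))
    (h : E → ℤ) (hh : h ∈ matchingHomology σ₀ σ₁) :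
    (cycMatrix σ).mulVec h = 0 := by
  induction hh using AddSubgroup.closure_induction with
  | mem x hx =>
    obtain ⟨m', m'', hm', hm'', rfl⟩ := hx
    rw [Matrix.mulVec_sub, cyc_mulVec_matching σ m' (hgen m' hm').1 (hgen m' hm').2,
      cyc_mulVec_matching σ m'' (hgen m'' hm'').1 (hgen m'' hm'').2, sub_self]
  | zero => exact Matrix.mulVec_zero _
  | add x y _ _ hx hy => rw [Matrix.mulVec_add, hx, hy, add_zero]
  | neg x _ hx => rw [Matrix.mulVec_neg, hx, neg_zero]

lemma antisymm_aux (σ₀ σ₁ σ : Equiv.Perm E) (m : E → ℤ)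
    (h01 : ∀ e, m e = 0 ∨ m e = 1)
    (hu : ∀ e, ∃! e', σ.SameCycle e e' ∧ m e' = 1)
    (hgen : ∀ m', IsPerfectMatching σ₀ σ₁ m' →
      (∀ e, m' e = 0 ∨ m' e = 1) ∧ (∀ e, ∃! e', σ.SameCycle e e' ∧ m' e' = 1))
    (h₁ h₂ : E → ℤ) (hh₁ : h₁ ∈ matchingHomology σ₀ σ₁) (hh₂ : h₂ ∈ matchingHomology σ₀ σ₁) :
    h₁ ⬝ᵥ (-1 + 2 • rhoMatrix σ m).mulVec h₂ = -(h₂ ⬝ᵥ (-1 + 2 • rhoMatrix σ m).mulVec h₁) := by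
  have key := rho_add_transpose σ m h01 hu
  have hC₂ := cyc_mulVec_homology σ₀ σ₁ σ hgen h₂ hh₂
  set A := -1 + 2 • rhoMatrix σ m with hA
  have hρT : (rhoMatrix σ m)ᵀ = 1 + cycMatrix σ - rhoMatrix σ m := by
    rw [← key]; abel
  have hAT : A + Aᵀ = 2 • cycMatrix σ := by
    rw [hA, Matrix.transpose_add, Matrix.transpose_neg, Matrix.transpose_one,
      Matrix.transpose_smul, hρT]
    simp only [two_smul]
    abel
  have hswap : h₂ ⬝ᵥ A.mulVec h₁ = h₁ ⬝ᵥ Aᵀ.mulVec h₂ := by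
    rw [Matrix.mulVec_transpose, dotProduct_comm h₁, ← Matrix.dotProduct_mulVec]
  rw [hswap, eq_neg_iff_add_eq_zero, ← dotProduct_add, ← Matrix.add_mulVec, hAT,
    Matrix.smul_mulVec, hC₂, smul_zero, dotProduct_zero]

end Aux

/-- Antisymmetry on `H₁` of the forms `ε_•` and `ε_∘` given by `-I + 2 ρ_{m,c}`
for `c = 0` and `c = 1`. -/
theorem epsBlack_epsWhite_antisymm [Fintype E] [DecidableEq E]
    (σ₀ σ₁ : Equiv.Perm E) (m : E → ℤ) (hm : IsPerfectMatching σ₀ σ₁ m)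
    (h₁ h₂ : E → ℤ)
    (hh₁ : h₁ ∈ matchingHomology σ₀ σ₁) (hh₂ : h₂ ∈ matchingHomology σ₀ σ₁) :
    (h₁ ⬝ᵥ (-1 + 2 • rhoMatrix σ₀ m).mulVec h₂ =
      -(h₂ ⬝ᵥ (-1 + 2 • rhoMatrix σ₀ m).mulVec h₁)) ∧
    (h₁ ⬝ᵥ (-1 + 2 • rhoMatrix σ₁ m).mulVec h₂ =
      -(h₂ ⬝ᵥ (-1 + 2 • rhoMatrix σ₁ m).mulVec h₁)) := by
  obtain ⟨h01, hu0, hu1⟩ := hm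
  exact ⟨antisymm_aux σ₀ σ₁ σ₀ m h01 hu0 (fun m' hm' => ⟨hm'.1, hm'.2.1⟩) h₁ h₂ hh₁ hh₂,
    antisymm_aux σ₀ σ₁ σ₁ m h01 hu1 (fun m' hm' => ⟨hm'.1, hm'.2.2⟩) h₁ h₂ hh₁ hh₂⟩
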